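/- Let μ : (0,∞) → [0,∞) be integrable with ∫₀^∞ μ(s) ds > 0 and μ not identically zero. Then for every ε > 0 there exists m₂ > 0 such that for all real λ with |λ| ≥ ε, ∫₀^∞ μ(s) |1 − e^{−iλ s}|² ds ≥ m₂. -/

import Mathlib

open Real Set MeasureTheory Complex

open Filter Topology FourierTransform

lemma norm_key (lam s : ℝ) :
    ‖1 - Complex.exp (-(Complex.I * lam * s))‖ ^ 2 = 2 - 2 * Real.cos (lam * s) := by
  have h : -(Complex.I * lam * s) = (↑(-(lam * s)) : ℂ) * Complex.I := by push_cast; ring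
  rw [h, Complex.sq_norm, Complex.normSq_apply]
  simp only [Complex.sub_re, Complex.sub_im, Complex.one_re, Complex.one_im,
    Complex.exp_ofReal_mul_I_re, Complex.exp_ofReal_mul_I_im, Real.cos_neg, Real.sin_neg]
  nlinarith [Real.sin_sq_add_cos_sq (lam * s)]


lemma intC (μ : ℝ → ℝ) (lam : ℝ) (hint : IntegrableOn μ (Ioi 0)) :
    IntegrableOn (fun s => μ s * Real.cos (lam * s)) (Ioi 0) := by
  have : IntegrableOn (fun s => Real.cos (lam * s) * μ s) (Ioi 0) :=
    Integrable.bdd_mul hint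
      ((Real.continuous_cos.comp (continuous_const.mul continuous_id)).aestronglyMeasurable)
      (c := 1) (Filter.Eventually.of_forall fun s => by simpa using Real.abs_cos_le_one (lam * s))
  simpa [mul_comm] using this

lemma tendC (μ : ℝ → ℝ) (hint : IntegrableOn μ (Ioi 0)) :
    Tendsto (fun lam => ∫ s in Ioi (0:ℝ), μ s * Real.cos (lam * s)) (cocompact ℝ) (𝓝 0) := by
  set f : ℝ → ℂ := (Ioi (0:ℝ)).indicator (fun s => (μ s : ℂ)) with hf
  have h0 : Tendsto (fun w : ℝ => ∫ v : ℝ, 𝐞 (-(v * w)) • f v) (cocompact ℝ) (𝓝 0) :=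
    Real.tendsto_integral_exp_smul_cocompact f
  have h2 : Tendsto (fun lam : ℝ => lam / (2 * π)) (cocompact ℝ) (cocompact ℝ) := by
    rw [cocompact_eq_atBot_atTop]
    refine Tendsto.sup_sup ?_ ?_
    · exact tendsto_id.atBot_div_const (by positivity)
    · exact tendsto_id.atTop_div_const (by positivity)
  have h3 : Tendsto (fun lam : ℝ => ∫ v : ℝ, 𝐞 (-(v * (lam / (2 * π)))) • f v)
      (cocompact ℝ) (𝓝 0) := h0.comp h2
  have h4 : Tendsto (fun lam : ℝ => (∫ v : ℝ, 𝐞 (-(v * (lam / (2 * π)))) • f v).re)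
      (cocompact ℝ) (𝓝 0) := by
    have := (Complex.continuous_re.tendsto 0).comp h3
    simpa [Function.comp_def] using this
  refine h4.congr fun lam => ?_
  have key : ∀ v : ℝ, 𝐞 (-(v * (lam / (2 * π)))) • f v
      = (Ioi (0:ℝ)).indicator
          (fun v => Complex.exp ((↑(-(v * lam)) : ℂ) * Complex.I) * (μ v : ℂ)) v := by
    intro v
    by_cases h : v ∈ Ioi (0:ℝ)
    · simp only [hf, Set.indicator_of_mem h, Circle.smul_def, Real.fourierChar_apply]
      have hr : 2 * π * -(v * (lam / (2 * π))) = -(v * lam) := by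
        have hpi : (π : ℝ) ≠ 0 := Real.pi_ne_zero
        field_simp
      rw [hr, smul_eq_mul]
    · simp [hf, Set.indicator_of_notMem h]
  rw [show (fun v : ℝ => 𝐞 (-(v * (lam / (2 * π)))) • f v) = _ from funext key,
    MeasureTheory.integral_indicator measurableSet_Ioi]
  have hintc : IntegrableOn
      (fun v => Complex.exp ((↑(-(v * lam)) : ℂ) * Complex.I) * (μ v : ℂ)) (Ioi 0) := by
    refine Integrable.bdd_mul (c := 1) hint.ofReal ?_ (Filter.Eventually.of_forall fun v => ?_)
    · exact (Complex.continuous_exp.comp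
        ((Complex.continuous_ofReal.comp (continuous_id.mul continuous_const).neg).mul
          continuous_const)).aestronglyMeasurable
    · simp [Complex.norm_exp]
  rw [show (∫ (x : ℝ) in Ioi 0, cexp ((↑(-(x * lam)) : ℂ) * I) * ↑(μ x)).re
      = ∫ x in Ioi 0, (cexp ((↑(-(x * lam)) : ℂ) * I) * (↑(μ x):ℂ)).re by
    simpa using (integral_re hintc).symm]
  refine setIntegral_congr_fun measurableSet_Ioi fun v _ => ?_
  simp only [Complex.mul_re, Complex.ofReal_re, Complex.ofReal_im, mul_zero, sub_zero,
    Complex.exp_ofReal_mul_I_re, Real.cos_neg]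
  rw [mul_comm, mul_comm v lam]


lemma contC (μ : ℝ → ℝ) (hint : IntegrableOn μ (Ioi 0)) :
    Continuous (fun lam => ∫ s in Ioi (0:ℝ), μ s * Real.cos (lam * s)) := by
  apply MeasureTheory.continuous_of_dominated
    (bound := fun s => |μ s|)
  · intro lam
    exact (hint.1.mul
      ((Real.continuous_cos.comp (continuous_const.mul continuous_id)).aestronglyMeasurable))
  · intro lam
    filter_upwards with s
    rw [Real.norm_eq_abs, abs_mul]
    calc |μ s| * |Real.cos (lam * s)| ≤ |μ s| * 1 :=
        mul_le_mul_of_nonneg_left (Real.abs_cos_le_one _) (abs_nonneg _)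
      _ = |μ s| := mul_one _
  · exact hint.norm
  · filter_upwards with s
    exact continuous_const.mul (Real.continuous_cos.comp (continuous_id.mul continuous_const))

lemma posG (μ : ℝ → ℝ) (hnonneg : ∀ s, 0 < s → 0 ≤ μ s) (hint : IntegrableOn μ (Ioi 0))
    (hmass : 0 < ∫ s in Ioi (0:ℝ), μ s) (lam : ℝ) (hlam : lam ≠ 0) :
    0 < ∫ s in Ioi (0:ℝ), μ s * (2 - 2 * Real.cos (lam * s)) := by
  set h : ℝ → ℝ := fun s => μ s * (2 - 2 * Real.cos (lam * s)) with hh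
  have hinth : IntegrableOn h (Ioi 0) := by
    have h1 : IntegrableOn (fun s => (2 - 2 * Real.cos (lam * s)) * μ s) (Ioi 0) :=
      Integrable.bdd_mul hint
        ((continuous_const.sub (continuous_const.mul
          (Real.continuous_cos.comp (continuous_const.mul continuous_id)))).aestronglyMeasurable)
        (c := 4) (Filter.Eventually.of_forall fun s => by
          have := Real.neg_one_le_cos (lam * s)
          have := Real.cos_le_one (lam * s)
          rw [Real.norm_eq_abs, abs_le]; constructor <;> nlinarith)
    simpa [hh, mul_comm] using h1
  have hpos : 0 ≤ᵐ[volume.restrict (Ioi 0)] h := by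
    rw [EventuallyLE, ae_restrict_iff' measurableSet_Ioi]
    filter_upwards with s hs
    have h1 := Real.cos_le_one (lam * s)
    have h2 := hnonneg s hs
    simp only [hh, Pi.zero_apply]
    nlinarith
  by_contra hcon
  push_neg at hcon
  have hzero : ∫ s in Ioi (0:ℝ), h s = 0 :=
    le_antisymm hcon (integral_nonneg_of_ae hpos)
  rw [integral_eq_zero_iff_of_nonneg_ae hpos hinth] at hzero
  -- the set where cos (lam * s) = 1 is null
  have hnull : volume {s : ℝ | Real.cos (lam * s) = 1} = 0 := by
    have hsub : {s : ℝ | Real.cos (lam * s) = 1} ⊆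
        Set.range (fun n : ℤ => (n : ℝ) * (2 * π) / lam) := by
      intro s hs
      rw [mem_setOf_eq, Real.cos_eq_one_iff] at hs
      obtain ⟨n, hn⟩ := hs
      exact ⟨n, by field_simp [hlam]; linarith [hn]⟩
    exact measure_mono_null hsub ((Set.countable_range _).measure_zero _)
  have hnull' : ∀ᵐ s ∂(volume.restrict (Ioi 0)), Real.cos (lam * s) ≠ 1 :=
    ae_restrict_of_ae (by
      rw [ae_iff]
      simpa using hnull)
  have hmu0 : μ =ᵐ[volume.restrict (Ioi 0)] 0 := by
    filter_upwards [hzero, hnull'] with s h1 h2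
    simp only [hh, Pi.zero_apply] at h1 ⊢
    rcases mul_eq_zero.mp h1 with h | h
    · exact h
    · exfalso
      have := Real.cos_le_one (lam * s)
      have : Real.cos (lam * s) = 1 := by linarith
      exact h2 this
  have : ∫ s in Ioi (0:ℝ), μ s = 0 := by
    rw [integral_congr_ae hmu0]
    simp
  linarith

theorem stmt_10 (μ : ℝ → ℝ)
    (hnonneg : ∀ s, 0 < s → 0 ≤ μ s)
    (hint : IntegrableOn μ (Ioi 0))
    (hmass : 0 < ∫ s in Ioi (0:ℝ), μ s) :
    ∀ ε > (0:ℝ), ∃ m₂ > (0:ℝ), ∀ lam : ℝ, ε ≤ |lam| →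
      m₂ ≤ ∫ s in Ioi (0:ℝ), μ s * ‖1 - Complex.exp (-(Complex.I * lam * s))‖ ^ 2 := by
  intro ε hε
  set M : ℝ := ∫ s in Ioi (0:ℝ), μ s with hM
  set C : ℝ → ℝ := fun lam => ∫ s in Ioi (0:ℝ), μ s * Real.cos (lam * s) with hC
  set g : ℝ → ℝ := fun lam => 2 * M - 2 * C lam with hg
  -- the statement integrand equals g
  have hGC : ∀ lam : ℝ, (∫ s in Ioi (0:ℝ), μ s * (2 - 2 * Real.cos (lam * s))) = g lam := by
    intro lam
    have h1 : (fun s => μ s * (2 - 2 * Real.cos (lam * s)))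
        = fun s => 2 * μ s - 2 * (μ s * Real.cos (lam * s)) := by
      funext s; ring
    rw [h1, integral_sub (hint.const_mul 2) ((intC μ lam hint).const_mul 2),
      integral_const_mul, integral_const_mul]
  have hF : ∀ lam : ℝ,
      (∫ s in Ioi (0:ℝ), μ s * ‖1 - Complex.exp (-(Complex.I * lam * s))‖ ^ 2) = g lam := by
    intro lam
    rw [← hGC lam]
    congr 1
    funext s
    rw [norm_key]
  have hgcont : Continuous g := continuous_const.sub (continuous_const.mul (contC μ hint))
  have hgpos : ∀ lam : ℝ, lam ≠ 0 → 0 < g lam := fun lam hlam => by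
    rw [← hGC lam]; exact posG μ hnonneg hint hmass lam hlam
  -- large lam bound
  have hev : ∀ᶠ lam in cocompact ℝ, dist (C lam) 0 < M / 2 :=
    Metric.tendsto_nhds.mp (tendC μ hint) (M / 2) (half_pos hmass)
  obtain ⟨K, hK, hKsub⟩ := (hasBasis_cocompact.eventually_iff).mp hev
  obtain ⟨r, hr⟩ := hK.isBounded.subset_closedBall 0
  set L : ℝ := max r ε with hL
  -- compact slab
  set S : Set ℝ := Icc (-L) (-ε) ∪ Icc ε L with hS
  have hScpt : IsCompact S := isCompact_Icc.union isCompact_Icc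
  have hSne : S.Nonempty := ⟨ε, Or.inr ⟨le_rfl, le_max_right r ε⟩⟩
  obtain ⟨x₀, hx₀S, hmin⟩ := hScpt.exists_isMinOn hSne hgcont.continuousOn
  have hx₀ne : x₀ ≠ 0 := by
    rcases hx₀S with h | h
    · intro h0; rw [h0] at h; linarith [h.2]
    · intro h0; rw [h0] at h; linarith [h.1]
  refine ⟨min (g x₀) M, lt_min (hgpos x₀ hx₀ne) hmass, fun lam hlam => ?_⟩
  rw [hF lam]
  rcases le_or_gt |lam| L with hle | hgt
  · have hmem : lam ∈ S := by
      rcases le_or_gt 0 lam with h0 | h0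
      · exact Or.inr ⟨by rwa [_root_.abs_of_nonneg h0] at hlam, by rwa [_root_.abs_of_nonneg h0] at hle⟩
      · refine Or.inl ⟨?_, ?_⟩
        · rw [_root_.abs_of_neg h0] at hle; linarith
        · rw [_root_.abs_of_neg h0] at hlam; linarith
    exact le_trans (min_le_left _ _) (hmin hmem)
  · have hnotK : lam ∉ K := fun hmem => by
      have := hr hmem
      rw [Real.closedBall_eq_Icc, mem_Icc] at this
      have : |lam| ≤ r := abs_le.mpr ⟨by linarith [this.1], by linarith [this.2]⟩
      have : |lam| ≤ L := this.trans (le_max_left r ε)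
      linarith
    have hCb : |C lam| < M / 2 := by
      have := hKsub hnotK
      simpa [Real.dist_eq] using this
    have : C lam < M / 2 := lt_of_le_of_lt (le_abs_self _) hCb
    have : M ≤ g lam := by simp only [hg]; linarith
    exact le_trans (min_le_right _ _) this
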